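/- Let d₁, d₂ be positive integers and let M be a Hermitian matrix indexed by (Fin d₁ × Fin d₂). Suppose that for every unitary matrix U ∈ U(d₁, ℂ) and every unitary matrix V ∈ U(d₂, ℂ), every diagonal entry of the conjugated matrix ((U ⊗ₖ V)ᴴ) * M * (U ⊗ₖ V) vanishes, i.e. for all p : Fin d₁ × Fin d₂, (((U ⊗ₖ V)ᴴ) * M * (U ⊗ₖ V))_{p,p} = 0. Then M = 0. -/

import Mathlib

open Matrix Kronecker

lemma quad_zero {d : ℕ} (N : Matrix (Fin d) (Fin d) ℂ)
    (h : ∀ y : Fin d → ℂ, ∑ b, ∑ c, star (y b) * N b c * y c = 0) : N = 0 := by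
  have hT : Matrix.toEuclideanLin N = 0 := by
    rw [← inner_map_self_eq_zero]
    intro x
    have hx := h (fun i => x i)
    simp only [RCLike.star_def] at hx
    simp only [PiLp.inner_apply, RCLike.inner_apply, Matrix.toEuclideanLin_apply,
      Matrix.mulVec, dotProduct,
      map_sum, _root_.map_mul, Finset.sum_mul, Finset.mul_sum]
    trans (starRingEnd ℂ) (∑ b, ∑ c, (starRingEnd ℂ) (x b) * N b c * x c)
    · simp only [map_sum, _root_.map_mul, Complex.conj_conj]
      exact Finset.sum_congr rfl fun i _ => Finset.sum_congr rfl fun j _ => by ring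
    · rw [hx, map_zero]
  simpa using (LinearEquiv.map_eq_zero_iff Matrix.toEuclideanLin).mp hT

lemma exists_unitary_col {d : ℕ} (i0 : Fin d) (u : EuclideanSpace ℂ (Fin d)) (hu : ‖u‖ = 1) :
    ∃ U : Matrix.unitaryGroup (Fin d) ℂ, ∀ i, (U : Matrix (Fin d) (Fin d) ℂ) i i0 = u i := by
  have hcard : Module.finrank ℂ (EuclideanSpace ℂ (Fin d)) = Fintype.card (Fin d) := by simp
  have horth : Orthonormal ℂ (({i0} : Set (Fin d)).restrict (fun _ => u)) := by
    constructor
    · intro i; exact hu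
    · intro i j hij
      exact absurd (Subtype.ext (by
        have hi := i.2; have hj := j.2
        simp only [Set.mem_singleton_iff] at hi hj
        rw [hi, hj])) hij
  obtain ⟨b, hb⟩ := horth.exists_orthonormalBasis_extension_of_card_eq hcard
  refine ⟨⟨(EuclideanSpace.basisFun (Fin d) ℂ).toBasis.toMatrix b,
    (EuclideanSpace.basisFun (Fin d) ℂ).toMatrix_orthonormalBasis_mem_unitary b⟩, fun i => ?_⟩
  have hbi0 : b i0 = u := hb i0 rfl
  simp [Module.Basis.toMatrix_apply, hbi0]

/-- If a Hermitian matrix `M` on `ℂ^{d₁} ⊗ ℂ^{d₂}` has vanishing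
diagonal in every simple-tensor basis (i.e. all diagonal entries of
`(U ⊗ₖ V)ᴴ * M * (U ⊗ₖ V)` vanish for all unitaries `U`, `V`), then `M = 0`. -/
theorem eq_zero_of_diag_vanishes_in_all_product_bases (d₁ d₂ : ℕ)
    (hd₁ : 0 < d₁) (hd₂ : 0 < d₂)
    (M : Matrix (Fin d₁ × Fin d₂) (Fin d₁ × Fin d₂) ℂ) (hM : M.IsHermitian)
    (h : ∀ U : Matrix.unitaryGroup (Fin d₁) ℂ, ∀ V : Matrix.unitaryGroup (Fin d₂) ℂ,
      ∀ p : Fin d₁ × Fin d₂,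
        ((((U : Matrix (Fin d₁) (Fin d₁) ℂ) ⊗ₖ (V : Matrix (Fin d₂) (Fin d₂) ℂ))ᴴ * M *
          ((U : Matrix (Fin d₁) (Fin d₁) ℂ) ⊗ₖ (V : Matrix (Fin d₂) (Fin d₂) ℂ))) p p) = 0) :
    M = 0 := by
  -- Step A : the quadratic form vanishes on simple tensors of unit vectors
  have key0 : ∀ (u : EuclideanSpace ℂ (Fin d₁)) (v : EuclideanSpace ℂ (Fin d₂)),
      ‖u‖ = 1 → ‖v‖ = 1 →
      ∑ q : Fin d₁ × Fin d₂, ∑ r : Fin d₁ × Fin d₂,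
        star (u q.1) * star (v q.2) * M q r * (u r.1 * v r.2) = 0 := by
    intro u v hu hv
    obtain ⟨U, hU⟩ := exists_unitary_col ⟨0, hd₁⟩ u hu
    obtain ⟨V, hV⟩ := exists_unitary_col ⟨0, hd₂⟩ v hv
    have hh := h U V (⟨0, hd₁⟩, ⟨0, hd₂⟩)
    rw [← hh]
    simp only [Matrix.mul_apply, Matrix.conjTranspose_apply, Matrix.kroneckerMap_apply,
      Finset.sum_mul, hU, hV]
    rw [Finset.sum_comm]
    refine Finset.sum_congr rfl fun q _ => Finset.sum_congr rfl fun r _ => ?_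
    rw [star_mul']
  -- Step B : drop the normalization
  have key : ∀ (x : Fin d₁ → ℂ) (y : Fin d₂ → ℂ),
      ∑ q : Fin d₁ × Fin d₂, ∑ r : Fin d₁ × Fin d₂,
        star (x q.1) * star (y q.2) * M q r * (x r.1 * y r.2) = 0 := by
    intro x y
    by_cases hx : x = 0
    · simp [hx]
    by_cases hy : y = 0
    · simp [hy]
    set X : EuclideanSpace ℂ (Fin d₁) := (WithLp.equiv 2 (Fin d₁ → ℂ)).symm x with hX
    set Y : EuclideanSpace ℂ (Fin d₂) := (WithLp.equiv 2 (Fin d₂ → ℂ)).symm y with hY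
    have hXne : X ≠ 0 := by
      intro h0
      exact hx (funext fun i => by
        have := congrFun (congrArg (WithLp.equiv 2 (Fin d₁ → ℂ)) h0) i
        simpa [hX] using this)
    have hYne : Y ≠ 0 := by
      intro h0
      exact hy (funext fun i => by
        have := congrFun (congrArg (WithLp.equiv 2 (Fin d₂ → ℂ)) h0) i
        simpa [hY] using this)
    have hnX : ‖X‖ ≠ 0 := norm_ne_zero_iff.mpr hXne
    have hnY : ‖Y‖ ≠ 0 := norm_ne_zero_iff.mpr hYne
    set c₁ : ℂ := ((‖X‖ : ℂ))⁻¹ with hc₁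
    set c₂ : ℂ := ((‖Y‖ : ℂ))⁻¹ with hc₂
    have hc₁ne : c₁ ≠ 0 := by
      simp [hc₁, hnX]
    have hc₂ne : c₂ ≠ 0 := by
      simp [hc₂, hnY]
    have hu : ‖c₁ • X‖ = 1 := by
      rw [norm_smul, hc₁, norm_inv, Complex.norm_real, norm_norm, inv_mul_cancel₀ hnX]
    have hv : ‖c₂ • Y‖ = 1 := by
      rw [norm_smul, hc₂, norm_inv, Complex.norm_real, norm_norm, inv_mul_cancel₀ hnY]
    have h0 := key0 (c₁ • X) (c₂ • Y) hu hv
    have happ₁ : ∀ i, (c₁ • X) i = c₁ * x i := by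
      intro i; simp [hX]
    have happ₂ : ∀ i, (c₂ • Y) i = c₂ * y i := by
      intro i; simp [hY]
    have hexp : ∑ q : Fin d₁ × Fin d₂, ∑ r : Fin d₁ × Fin d₂,
        star ((c₁ • X) q.1) * star ((c₂ • Y) q.2) * M q r * ((c₁ • X) r.1 * (c₂ • Y) r.2)
        = (star c₁ * c₁ * (star c₂ * c₂)) *
          ∑ q : Fin d₁ × Fin d₂, ∑ r : Fin d₁ × Fin d₂,
            star (x q.1) * star (y q.2) * M q r * (x r.1 * y r.2) := by
      rw [Finset.mul_sum]
      refine Finset.sum_congr rfl fun q _ => ?_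
      rw [Finset.mul_sum]
      refine Finset.sum_congr rfl fun r _ => ?_
      rw [happ₁, happ₁, happ₂, happ₂, star_mul', star_mul']
      ring
    rw [hexp] at h0
    rcases mul_eq_zero.mp h0 with h1 | h1
    · exact absurd h1 (by
        simp [star_eq_zero, hc₁ne, hc₂ne])
    · exact h1
  -- Step C : polarize in the first factor
  have key2 : ∀ (y : Fin d₂ → ℂ),
      (fun a c => ∑ b, ∑ e, star (y b) * M (a, b) (c, e) * y e :
        Matrix (Fin d₁) (Fin d₁) ℂ) = 0 := by
    intro y
    refine quad_zero _ fun x => ?_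
    have hk := key x y
    simp only [Fintype.sum_prod_type] at hk
    rw [← hk]
    simp only [Finset.sum_mul, Finset.mul_sum]
    refine Finset.sum_congr rfl fun a _ => ?_
    rw [Finset.sum_comm]
    exact Finset.sum_congr rfl fun b _ => Finset.sum_congr rfl fun c _ =>
      Finset.sum_congr rfl fun e _ => by ring
  -- Step D : polarize in the second factor
  have key3 : ∀ (a c : Fin d₁),
      (fun b e => M (a, b) (c, e) : Matrix (Fin d₂) (Fin d₂) ℂ) = 0 := by
    intro a c
    refine quad_zero _ fun y => ?_
    exact congrFun (congrFun (key2 y) a) c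
  ext ⟨a, b⟩ ⟨c, e⟩
  have := congrFun (congrFun (key3 a c) b) e
  simpa using this
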